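/- arXiv:2602.15709 — 2 statements merged into one kernel-verified Lean document; each statement's English description precedes it below -/
import Mathlib

section
/- Let f : ℕ → (0,∞) satisfy f(k+1)/f(k) → c as k → ∞ for some c > 1. Define Ψ(k) as the least ℓ ∈ ℕ such that (∏_{j=1}^{ℓ} f(k+j-1)) / ((2 f(k-1))^ℓ (ℓ+1)!) ≥ 8 (with Ψ(k) = ∞ if no such ℓ exists). Then Ψ(k) is finite for every k ≥ 1, and moreover sup_k Ψ(k) < ∞. -/
open Filter Finset

private noncomputable def gfun (f : ℕ → ℝ) (k ℓ : ℕ) : ℝ :=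
  (∏ j ∈ Finset.range ℓ, f (k + j)) /
    ((2 * f (k - 1)) ^ ℓ * (Nat.factorial (ℓ + 1) : ℝ))

private lemma gfun_pos {f : ℕ → ℝ} (hf : ∀ k, 0 < f k) (k ℓ : ℕ) : 0 < gfun f k ℓ := by
  unfold gfun
  apply div_pos (Finset.prod_pos fun j _ => hf _)
  have := hf (k - 1)
  positivity

private lemma gfun_succ {f : ℕ → ℝ} (hf : ∀ k, 0 < f k) (k ℓ : ℕ) :
    gfun f k (ℓ + 1) = gfun f k ℓ * (f (k + ℓ) / (2 * f (k - 1) * ((ℓ : ℝ) + 2))) := by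
  unfold gfun
  have h2 : ((Nat.factorial (ℓ + 1 + 1) : ℕ) : ℝ) = ((ℓ : ℝ) + 2) * (Nat.factorial (ℓ + 1) : ℝ) := by
    rw [Nat.factorial_succ]; push_cast; ring
  rw [Finset.prod_range_succ, div_mul_div_comm, h2]
  congr 1
  ring

private lemma geom_dom {r : ℝ} (hr : 1 < r) (A : ℝ) :
    ∀ᶠ n : ℕ in atTop, A * ((n : ℝ) + 2) ≤ r ^ n := by
  have hr0 : 0 < r := by linarith
  have hinv0 : 0 ≤ r⁻¹ := by positivity
  have hinv1 : r⁻¹ < 1 := inv_lt_one_of_one_lt₀ hr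
  have h1 : Tendsto (fun n : ℕ => (n : ℝ) ^ 1 * r⁻¹ ^ n) atTop (nhds 0) :=
    tendsto_pow_const_mul_const_pow_of_lt_one 1 hinv0 hinv1
  have h2 : Tendsto (fun n : ℕ => 2 * r⁻¹ ^ n) atTop (nhds 0) := by
    simpa using (tendsto_pow_atTop_nhds_zero_of_lt_one hinv0 hinv1).const_mul 2
  have h0 : Tendsto (fun n : ℕ => ((n : ℝ) + 2) * r⁻¹ ^ n) atTop (nhds 0) := by
    have := h1.add h2
    simp only [add_zero] at this
    convert this using 2 with n
    ring
  set B : ℝ := max A 1 with hBdef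
  have hB : 0 < B := lt_of_lt_of_le one_pos (le_max_right A 1)
  have h3 : ∀ᶠ n : ℕ in atTop, ((n : ℝ) + 2) * r⁻¹ ^ n < B⁻¹ :=
    h0.eventually (gt_mem_nhds (by positivity))
  filter_upwards [h3] with n hn
  have hrn : 0 < r ^ n := pow_pos hr0 n
  have key : ((n : ℝ) + 2) < B⁻¹ * r ^ n := by
    have := mul_lt_mul_of_pos_right hn hrn
    rwa [mul_assoc, inv_pow, inv_mul_cancel₀ hrn.ne', mul_one] at this
  calc A * ((n : ℝ) + 2) ≤ B * ((n : ℝ) + 2) :=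
        mul_le_mul_of_nonneg_right (le_max_left A 1) (by positivity)
    _ ≤ B * (B⁻¹ * r ^ n) := le_of_lt (mul_lt_mul_of_pos_left key hB)
    _ = r ^ n := by rw [← mul_assoc, mul_inv_cancel₀ hB.ne', one_mul]

private lemma exists_big {u : ℕ → ℝ} (hu : ∀ n, 0 < u n)
    (h : ∀ᶠ n in atTop, 2 * u n ≤ u (n + 1)) : ∃ n, 1 ≤ n ∧ 8 ≤ u n := by
  obtain ⟨N, hN⟩ := eventually_atTop.mp h
  set M := max N 1 with hM
  have hv : Tendsto (fun n => u (n + M)) atTop atTop := by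
    apply tendsto_atTop_of_geom_le (by simpa using hu M) one_lt_two
    intro n
    have := hN (n + M) (le_trans (le_max_left N 1) (Nat.le_add_left M n))
    simpa [show n + M + 1 = n + 1 + M by omega] using this
  obtain ⟨n, hn⟩ := (hv.eventually_ge_atTop 8).exists
  exact ⟨n + M, le_trans (le_trans (le_max_right N 1) (Nat.le_add_left M n)) le_rfl, hn⟩

theorem stmt_4 (f : ℕ → ℝ) (hf : ∀ k, 0 < f k) (c : ℝ) (hc : 1 < c)
    (hlim : Tendsto (fun k => f (k + 1) / f k) atTop (nhds c)) :
    ∃ B : ℕ, ∀ k : ℕ, 1 ≤ k → ∃ ℓ : ℕ, 1 ≤ ℓ ∧ ℓ ≤ B ∧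
      8 ≤ (∏ j ∈ Finset.range ℓ, f (k + j)) /
        ((2 * f (k - 1)) ^ ℓ * (Nat.factorial (ℓ + 1) : ℝ)) := by
  set c' : ℝ := (1 + c) / 2 with hc'def
  have hc'1 : 1 < c' := by rw [hc'def]; linarith
  have hc'c : c' < c := by rw [hc'def]; linarith
  have hc'0 : 0 < c' := by linarith
  -- eventual ratio bound
  obtain ⟨K, hK⟩ := eventually_atTop.mp (hlim.eventually_const_le hc'c)
  have hstep : ∀ m, K ≤ m → c' * f m ≤ f (m + 1) := fun m hm =>
    (le_div_iff₀ (hf m)).mp (hK m hm)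
  have hmulti : ∀ m, K ≤ m → ∀ j, c' ^ j * f m ≤ f (m + j) := by
    intro m hm j
    induction j with
    | zero => simp
    | succ j ih =>
      have h1 : c' ^ (j + 1) * f m = c' * (c' ^ j * f m) := by ring
      calc c' ^ (j + 1) * f m = c' * (c' ^ j * f m) := h1
        _ ≤ c' * f (m + j) := mul_le_mul_of_nonneg_left ih hc'0.le
        _ ≤ f (m + j + 1) := hstep (m + j) (le_trans hm (Nat.le_add_right m j))
  -- Claim A : per-k existence
  have claimA : ∀ k : ℕ, 1 ≤ k → ∃ ℓ, 1 ≤ ℓ ∧ 8 ≤ gfun f k ℓ := by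
    intro k hk
    apply exists_big (gfun_pos hf k)
    have hA : ∀ᶠ ℓ : ℕ in atTop, 4 * f (k - 1) * ((ℓ : ℝ) + 2) ≤ f (k + ℓ) := by
      have hg := geom_dom hc'1 (4 * f (k - 1) * c' ^ K / f K)
      filter_upwards [hg, eventually_ge_atTop K] with ℓ hg hℓK
      have hKkl : K ≤ k + ℓ := le_trans hℓK (Nat.le_add_left ℓ k)
      have h1 : c' ^ (k + ℓ - K) * f K ≤ f (k + ℓ) := by
        have := hmulti K le_rfl (k + ℓ - K)
        rwa [Nat.add_sub_cancel' hKkl] at this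
      have h2 : c' ^ (ℓ - K) ≤ c' ^ (k + ℓ - K) :=
        pow_le_pow_right₀ hc'1.le (Nat.sub_le_sub_right (Nat.le_add_left ℓ k) K)
      have h3 : c' ^ (ℓ - K) * c' ^ K = c' ^ ℓ := by
        rw [← pow_add, Nat.sub_add_cancel hℓK]
      have hcK : 0 < c' ^ K := pow_pos hc'0 K
      have e1 : 4 * f (k - 1) * ((ℓ : ℝ) + 2) ≤ c' ^ (ℓ - K) * f K := by
        rw [div_mul_eq_mul_div, div_le_iff₀ (hf K)] at hg
        rw [← mul_le_mul_iff_left₀ hcK]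
        calc 4 * f (k - 1) * ((ℓ : ℝ) + 2) * c' ^ K
            = 4 * f (k - 1) * c' ^ K * ((ℓ : ℝ) + 2) := by ring
          _ ≤ c' ^ ℓ * f K := hg
          _ = c' ^ (ℓ - K) * f K * c' ^ K := by rw [← h3]; ring
      calc 4 * f (k - 1) * ((ℓ : ℝ) + 2) ≤ c' ^ (ℓ - K) * f K := e1
        _ ≤ c' ^ (k + ℓ - K) * f K := mul_le_mul_of_nonneg_right h2 (hf K).le
        _ ≤ f (k + ℓ) := h1
    filter_upwards [hA] with ℓ hℓ
    rw [gfun_succ hf]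
    have hg0 : 0 < gfun f k ℓ := gfun_pos hf k ℓ
    have h2 : (2 : ℝ) ≤ f (k + ℓ) / (2 * f (k - 1) * ((ℓ : ℝ) + 2)) := by
      rw [le_div_iff₀ (by have := hf (k - 1); positivity)]
      linarith
    calc 2 * gfun f k ℓ = gfun f k ℓ * 2 := by ring
      _ ≤ gfun f k ℓ * (f (k + ℓ) / (2 * f (k - 1) * ((ℓ : ℝ) + 2))) :=
          mul_le_mul_of_nonneg_left h2 hg0.le
  -- Claim B : uniform for k ≥ K + 1
  set a : ℕ → ℝ := fun ℓ =>
    (∏ j ∈ Finset.range ℓ, c' ^ (j + 1)) / (2 ^ ℓ * (Nat.factorial (ℓ + 1) : ℝ)) with ha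
  have ha_pos : ∀ ℓ, 0 < a ℓ := by
    intro ℓ
    apply div_pos (Finset.prod_pos fun j _ => pow_pos hc'0 _)
    positivity
  have ha_succ : ∀ ℓ, a (ℓ + 1) = a ℓ * (c' ^ (ℓ + 1) / (2 * ((ℓ : ℝ) + 2))) := by
    intro ℓ
    simp only [ha]
    rw [Finset.prod_range_succ]
    have h2 : ((Nat.factorial (ℓ + 1 + 1) : ℕ) : ℝ) =
        ((ℓ : ℝ) + 2) * (Nat.factorial (ℓ + 1) : ℝ) := by
      rw [Nat.factorial_succ]; push_cast; ring
    have h3 : (Nat.factorial (ℓ + 1) : ℝ) ≠ 0 := Nat.cast_ne_zero.mpr (Nat.factorial_ne_zero _)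
    rw [h2]
    field_simp
    ring
  have hB : ∃ ℓ0, 1 ≤ ℓ0 ∧ 8 ≤ a ℓ0 := by
    apply exists_big ha_pos
    filter_upwards [geom_dom hc'1 4] with ℓ hℓ
    rw [ha_succ]
    have h2 : (2 : ℝ) ≤ c' ^ (ℓ + 1) / (2 * ((ℓ : ℝ) + 2)) := by
      rw [le_div_iff₀ (by positivity)]
      have : c' ^ ℓ ≤ c' ^ (ℓ + 1) := pow_le_pow_right₀ hc'1.le (Nat.le_succ ℓ)
      linarith
    have hg0 := ha_pos ℓ
    calc 2 * a ℓ = a ℓ * 2 := by ring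
      _ ≤ a ℓ * (c' ^ (ℓ + 1) / (2 * ((ℓ : ℝ) + 2))) := mul_le_mul_of_nonneg_left h2 hg0.le
  obtain ⟨ℓ0, hℓ0_1, hℓ0_8⟩ := hB
  have hbound : ∀ k, K + 1 ≤ k → ∀ ℓ, a ℓ ≤ gfun f k ℓ := by
    intro k hkK ℓ
    have hk1 : 1 ≤ k := le_trans (Nat.le_add_left 1 K) hkK
    have hmK : K ≤ k - 1 := by omega
    have hnum : (∏ j ∈ Finset.range ℓ, c' ^ (j + 1)) * f (k - 1) ^ ℓ ≤
        ∏ j ∈ Finset.range ℓ, f (k + j) := by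
      rw [show f (k - 1) ^ ℓ = ∏ _j ∈ Finset.range ℓ, f (k - 1) by simp,
        ← Finset.prod_mul_distrib]
      apply Finset.prod_le_prod
      · intro j _; have := hf (k - 1); positivity
      · intro j _
        have := hmulti (k - 1) hmK (j + 1)
        rwa [show k - 1 + (j + 1) = k + j by omega] at this
    have hfk : (0 : ℝ) < f (k - 1) := hf (k - 1)
    have hD : (0 : ℝ) < (2 * f (k - 1)) ^ ℓ * (Nat.factorial (ℓ + 1) : ℝ) := by
      have h3 : (0 : ℝ) < (Nat.factorial (ℓ + 1) : ℝ) :=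
        Nat.cast_pos.mpr (Nat.factorial_pos _)
      positivity
    have e : a ℓ = ((∏ j ∈ Finset.range ℓ, c' ^ (j + 1)) * f (k - 1) ^ ℓ) /
        ((2 * f (k - 1)) ^ ℓ * (Nat.factorial (ℓ + 1) : ℝ)) := by
      simp only [ha]
      rw [mul_pow]
      have h3 : (Nat.factorial (ℓ + 1) : ℝ) ≠ 0 := Nat.cast_ne_zero.mpr (Nat.factorial_ne_zero _)
      have h4 : f (k - 1) ^ ℓ ≠ 0 := (pow_pos hfk ℓ).ne'
      field_simp
    rw [e]
    unfold gfun
    exact div_le_div_of_nonneg_right hnum hD.le |>.trans_eq rfl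
  -- assemble
  have hAchoice : ∀ k : ℕ, ∃ ℓ, 1 ≤ k → (1 ≤ ℓ ∧ 8 ≤ gfun f k ℓ) := by
    intro k
    by_cases h : 1 ≤ k
    · obtain ⟨ℓ, h1, h2⟩ := claimA k h
      exact ⟨ℓ, fun _ => ⟨h1, h2⟩⟩
    · exact ⟨0, fun h' => absurd h' h⟩
  choose L hL using hAchoice
  refine ⟨max ℓ0 ((Finset.Icc 1 K).sup L), ?_⟩
  intro k hk
  by_cases hkK : k ≤ K
  · obtain ⟨h1, h8⟩ := hL k hk
    exact ⟨L k, h1,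
      le_trans (Finset.le_sup (Finset.mem_Icc.mpr ⟨hk, hkK⟩)) (le_max_right _ _), h8⟩
  · have hkK' : K + 1 ≤ k := by omega
    exact ⟨ℓ0, hℓ0_1, le_max_left _ _, le_trans hℓ0_8 (hbound k hkK' ℓ0)⟩
end

section
/- Let f : ℕ → (0,∞) and for k, ℓ ∈ ℕ define A_{k,ℓ} = Σ over all finitely supported sequences (y_j)_{j ≥ k} of non-negative integers with Σ_{j ≥ k} y_j = ℓ of ∏_{j ≥ k} (f(k)/f(j))^{y_j}, assuming all these series converge. Then for every k and every ℓ ≥ 1, A_{k,ℓ} = Σ_{r = k}^{∞} (f(k)/f(r))^ℓ · A_{r, ℓ−1}. -/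
open Finset

private lemma prod_div_pow (f : ℕ → ℝ) (b : ℝ) (y : ℕ →₀ ℕ) :
    (∏ j ∈ y.support, (b / f j) ^ (y j)) =
      b ^ (y.sum fun _ m => m) / ∏ j ∈ y.support, (f j) ^ (y j) := by
  rw [Finsupp.sum, ← Finset.prod_pow_eq_pow_sum, ← Finset.prod_div_distrib]
  exact Finset.prod_congr rfl fun j _ => div_pow _ _ _

private lemma prodf_add_single (f : ℕ → ℝ) (c : ℕ) (z : ℕ →₀ ℕ) :
    ∏ j ∈ (z + Finsupp.single c 1).support, f j ^ ((z + Finsupp.single c 1 : ℕ →₀ ℕ) j)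
      = (∏ j ∈ z.support, f j ^ z j) * f c := by
  have h := Finsupp.prod_add_index' (f := z) (g := Finsupp.single c 1)
    (h := fun j m => f j ^ m) (fun _ => pow_zero _) (fun a b₁ b₂ => pow_add _ _ _)
  simpa [Finsupp.prod, Finsupp.support_single_ne_zero _ one_ne_zero] using h

private lemma supp_add_single (c : ℕ) (z : ℕ →₀ ℕ) (hz : ∀ j ∈ z.support, c ≤ j) :
    (c ∈ (z + Finsupp.single c 1).support) ∧
      ∀ j ∈ (z + Finsupp.single c 1).support, c ≤ j := by
  constructor
  · simp [Finsupp.mem_support_iff]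
  · intro j hj
    rcases Finset.mem_union.mp (Finsupp.support_add hj) with h | h
    · exact hz j h
    · rw [Finsupp.support_single_ne_zero _ one_ne_zero] at h
      simp only [Finset.mem_singleton] at h
      omega

private lemma sum_add_single (c : ℕ) (z : ℕ →₀ ℕ) :
    (z + Finsupp.single c 1).sum (fun _ m => m) = z.sum (fun _ m => m) + 1 := by
  rw [Finsupp.sum_add_index' (fun _ => rfl) (fun _ _ _ => rfl), Finsupp.sum_single_index rfl]

private noncomputable def eqv (k l : ℕ) (hl : 1 ≤ l) :
    (Σ r : ℕ, {z : ℕ →₀ ℕ // (∀ j ∈ z.support, k + r ≤ j) ∧ z.sum (fun _ m => m) = l - 1}) ≃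
    {y : ℕ →₀ ℕ // (∀ j ∈ y.support, k ≤ j) ∧ y.sum (fun _ m => m) = l} :=
  Equiv.ofBijective
    (fun p => ⟨p.2.1 + Finsupp.single (k + p.1) 1,
      fun j hj => le_trans (Nat.le_add_right k p.1) ((supp_add_single _ _ p.2.2.1).2 j hj),
      by rw [sum_add_single, p.2.2.2]; omega⟩)
    (by
      constructor
      · rintro ⟨r1, z1, hz1, hs1⟩ ⟨r2, z2, hz2, hs2⟩ h
        simp only [Subtype.mk.injEq] at h
        have hr : r1 = r2 := by
          have h1 := supp_add_single (k + r1) z1 hz1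
          have h2 := supp_add_single (k + r2) z2 hz2
          rw [h] at h1
          have e1 := h2.2 _ h1.1
          have e2 := h1.2 _ h2.1
          omega
        subst hr
        have hz : z1 = z2 := by
          have := congrArg (· - Finsupp.single (k + r1) 1) h
          simpa [add_tsub_cancel_right] using this
        simp [hz]
      · rintro ⟨y, hy1, hy2⟩
        have hne : y.support.Nonempty := by
          rcases Finset.eq_empty_or_nonempty y.support with h | h
          · exfalso
            rw [Finsupp.support_eq_empty] at h
            rw [h] at hy2
            simp [Finsupp.sum_zero_index] at hy2
            omega
          · exact h
        set r := y.support.min' hne with hr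
        have hrmem : r ∈ y.support := Finset.min'_mem _ _
        have hkr : k ≤ r := hy1 r hrmem
        have hyr : 1 ≤ y r := Nat.one_le_iff_ne_zero.mpr (Finsupp.mem_support_iff.mp hrmem)
        have hle : Finsupp.single r 1 ≤ y := by rw [Finsupp.single_le_iff]; exact hyr
        have hcancel : (y - Finsupp.single r 1) + Finsupp.single r 1 = y :=
          tsub_add_cancel_of_le hle
        refine ⟨⟨r - k, y - Finsupp.single r 1, ?_, ?_⟩, ?_⟩
        · intro j hj
          have : j ∈ y.support := Finsupp.support_tsub hj
          have := Finset.min'_le _ j this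
          omega
        · have := sum_add_single r (y - Finsupp.single r 1)
          rw [hcancel] at this
          omega
        · apply Subtype.ext
          simp only
          rw [show k + (r - k) = r by omega, hcancel])

theorem stmt_15 (f : ℕ → ℝ) (hf : ∀ n, 0 < f n)
    (A : ℕ → ℕ → ℝ)
    (hA : ∀ k l : ℕ,
      HasSum (fun y : {y : ℕ →₀ ℕ // (∀ j ∈ y.support, k ≤ j) ∧ y.sum (fun _ m => m) = l} =>
        ∏ j ∈ (y : ℕ →₀ ℕ).support, (f k / f j) ^ ((y : ℕ →₀ ℕ) j)) (A k l)) :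
    ∀ k l : ℕ, 1 ≤ l →
      HasSum (fun r : ℕ => (f k / f (k + r)) ^ l * A (k + r) (l - 1)) (A k l) := by
  intro k l hl
  have key : HasSum
      (fun p : (Σ r : ℕ, {z : ℕ →₀ ℕ // (∀ j ∈ z.support, k + r ≤ j) ∧
          z.sum (fun _ m => m) = l - 1}) =>
        (f k / f (k + p.1)) ^ l *
          ∏ j ∈ (p.2 : ℕ →₀ ℕ).support, (f (k + p.1) / f j) ^ ((p.2 : ℕ →₀ ℕ) j))
      (A k l) := by
    have h := ((eqv k l hl).hasSum_iff).mpr (hA k l)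
    have heq : ∀ p : (Σ r : ℕ, {z : ℕ →₀ ℕ // (∀ j ∈ z.support, k + r ≤ j) ∧
          z.sum (fun _ m => m) = l - 1}),
        (∏ j ∈ ((eqv k l hl p : ℕ →₀ ℕ)).support,
            (f k / f j) ^ ((eqv k l hl p : ℕ →₀ ℕ) j)) =
        (f k / f (k + p.1)) ^ l *
          ∏ j ∈ (p.2 : ℕ →₀ ℕ).support, (f (k + p.1) / f j) ^ ((p.2 : ℕ →₀ ℕ) j) := by
      rintro ⟨r, z, hz1, hz2⟩
      have hcoe : ((eqv k l hl ⟨r, ⟨z, hz1, hz2⟩⟩ : ℕ →₀ ℕ)) =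
          z + Finsupp.single (k + r) 1 := rfl
      rw [hcoe]
      dsimp only
      set c := k + r with hc
      rw [prod_div_pow, prod_div_pow, sum_add_single, hz2, prodf_add_single]
      have hPc : (0:ℝ) < f c := hf c
      have hP : (0:ℝ) < ∏ j ∈ z.support, f j ^ z j :=
        Finset.prod_pos fun j _ => pow_pos (hf j) _
      have hpow : f c ^ (l - 1) * f c = f c ^ l := by
        rw [← pow_succ]
        congr 1
        omega
      have hl1 : l - 1 + 1 = l := by omega
      rw [hl1, div_pow]
      field_simp
      rw [← hpow]
      ring
    exact (funext heq) ▸ h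
  have fib : ∀ r : ℕ, HasSum
      (fun z : {z : ℕ →₀ ℕ // (∀ j ∈ z.support, k + r ≤ j) ∧ z.sum (fun _ m => m) = l - 1} =>
        (f k / f (k + r)) ^ l * ∏ j ∈ (z : ℕ →₀ ℕ).support, (f (k + r) / f j) ^ ((z : ℕ →₀ ℕ) j))
      ((f k / f (k + r)) ^ l * A (k + r) (l - 1)) :=
    fun r => (hA (k + r) (l - 1)).mul_left _
  exact key.sigma fib
end
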